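/- Work in the field ℚ(q) of rational functions in one variable q over ℚ. For every integer m ≥ 1, one has ∑_{k=0}^{m} (−1)^k [m,k]_q · ( ∑_{l=0}^{m−k−1} q^{−(m−1)k − 2(m−1) + 2l} ) = q (q − q^{−1})^{−1} · ∏_{j=1}^{m} (1 − q^{−2j}). -/

import Mathlib

noncomputable def q : RatFunc ℚ := RatFunc.X

/-- The balanced Gaussian binomial coefficient `[m, k]_q` in `ℚ(q)`. -/
noncomputable def qbinom (m k : ℕ) : RatFunc ℚ :=
  ∏ j ∈ Finset.range k,
    (q ^ ((m : ℤ) - k + j + 1) - q ^ (-((m : ℤ) - k + j + 1))) /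
      (q ^ ((j : ℤ) + 1) - q ^ (-((j : ℤ) + 1)))

lemma q_ne_zero : q ≠ 0 := RatFunc.X_ne_zero

lemma qmul (a b : ℤ) : q ^ a * q ^ b = q ^ (a + b) := (zpow_add₀ q_ne_zero a b).symm

lemma q_pow_ne_one {n : ℕ} (hn : n ≠ 0) : q ^ (n : ℤ) ≠ 1 := by
  rw [zpow_natCast]
  intro h
  have h2 : (Polynomial.X : Polynomial ℚ) ^ n = 1 := by
    apply RatFunc.algebraMap_injective ℚ
    simpa [map_pow, RatFunc.algebraMap_X, q] using h
  have := congrArg Polynomial.natDegree h2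
  simp [Polynomial.natDegree_X_pow] at this
  exact hn this

/-- `hh t = q^t - q^(-t)`. -/
noncomputable def hh (t : ℤ) : RatFunc ℚ := q ^ t - q ^ (-t)

lemma hh_ne_zero {t : ℤ} (ht : 0 < t) : hh t ≠ 0 := by
  intro h
  have h1 : q ^ t = q ^ (-t) := sub_eq_zero.mp h
  have h2 : q ^ (2 * t) = 1 := by
    have e : q ^ (2*t) = q ^ t * q ^ t := by rw [qmul, two_mul]
    have e2 : q ^ t * q ^ (-t) = 1 := by rw [qmul]; norm_num
    rw [e]; nth_rewrite 2 [h1]; exact e2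
  have h3 : (2 * t) = ((2 * t).toNat : ℤ) := by omega
  rw [h3] at h2
  exact q_pow_ne_one (by omega) h2

lemma qbinom_eq (n k : ℕ) :
    qbinom n k = (∏ j ∈ Finset.range k, hh ((n : ℤ) - k + j + 1)) /
      (∏ j ∈ Finset.range k, hh ((j : ℤ) + 1)) := by
  rw [qbinom, ← Finset.prod_div_distrib]
  rfl

lemma den_ne_zero (k : ℕ) : (∏ j ∈ Finset.range k, hh ((j : ℤ) + 1)) ≠ 0 := by
  apply Finset.prod_ne_zero_iff.mpr
  intro j _
  exact hh_ne_zero (by positivity)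

lemma qbinom_zero (n : ℕ) : qbinom n 0 = 1 := by simp [qbinom]

lemma qbinom_self (n : ℕ) : qbinom n n = 1 := by
  rw [qbinom_eq]
  have : (∏ j ∈ Finset.range n, hh ((n : ℤ) - n + j + 1)) =
      ∏ j ∈ Finset.range n, hh ((j : ℤ) + 1) := by
    apply Finset.prod_congr rfl
    intro j _
    congr 1
    ring
  rw [this, div_self (den_ne_zero n)]

lemma qbinom_of_lt {n k : ℕ} (h : n < k) : qbinom n k = 0 := by
  rw [qbinom]
  apply Finset.prod_eq_zero (Finset.mem_range.mpr (show k - n - 1 < k by omega))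
  have e : (n : ℤ) - k + ((k - n - 1 : ℕ) : ℤ) + 1 = 0 := by
    have : ((k - n - 1 : ℕ) : ℤ) = (k : ℤ) - n - 1 := by omega
    rw [this]; ring
  rw [e]
  norm_num

lemma prod_hh_shift (a : ℤ) (k : ℕ) :
    ∏ j ∈ Finset.range (k + 1), hh (a + j) = hh a * ∏ j ∈ Finset.range k, hh (a + j + 1) := by
  rw [Finset.prod_range_succ', mul_comm]
  congr 1
  · congr 1; norm_num
  · apply Finset.prod_congr rfl; intro j _; congr 1; push_cast; ring

lemma qbinom_step (n k : ℕ) :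
    qbinom n (k + 1) * hh ((k : ℤ) + 1) = qbinom n k * hh ((n : ℤ) - k) := by
  rw [qbinom_eq, qbinom_eq]
  have hN : (∏ j ∈ Finset.range (k+1), hh ((n : ℤ) - (k+1 : ℕ) + j + 1)) =
      hh ((n : ℤ) - k) * ∏ j ∈ Finset.range k, hh ((n : ℤ) - k + j + 1) := by
    rw [show (∏ j ∈ Finset.range (k+1), hh ((n : ℤ) - (k+1 : ℕ) + j + 1)) =
        ∏ j ∈ Finset.range (k+1), hh (((n : ℤ) - k) + j) from
      Finset.prod_congr rfl (fun j _ => by congr 1; push_cast; try ring)]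
    exact prod_hh_shift _ _
  have hD : (∏ j ∈ Finset.range (k+1), hh ((j : ℤ) + 1)) =
      (∏ j ∈ Finset.range k, hh ((j : ℤ) + 1)) * hh ((k : ℤ) + 1) := by
    rw [Finset.prod_range_succ]
  rw [hN, hD]
  have h1 := den_ne_zero k
  have h2 := hh_ne_zero (show (0:ℤ) < (k : ℤ) + 1 by positivity)
  field_simp

lemma qbinom_absorb (n k : ℕ) :
    qbinom (n + 1) k * hh ((n : ℤ) + 1 - k) = qbinom n k * hh ((n : ℤ) + 1) := by
  rw [qbinom_eq, qbinom_eq]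
  rw [div_mul_eq_mul_div, div_mul_eq_mul_div]
  congr 1
  set a : ℤ := (n : ℤ) + 1 - k with ha
  have e1 : (∏ j ∈ Finset.range k, hh (((n+1 : ℕ) : ℤ) - k + j + 1)) =
      ∏ j ∈ Finset.range k, hh (a + j + 1) :=
    Finset.prod_congr rfl (fun j _ => by first | (congr 1; push_cast [ha]; ring) | congr 1)
  have e2 : (∏ j ∈ Finset.range k, hh ((n : ℤ) - k + j + 1)) =
      ∏ j ∈ Finset.range k, hh (a + j) :=
    Finset.prod_congr rfl (fun j _ => by first | (congr 1; push_cast [ha]; ring) | congr 1)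
  rw [e1, e2]
  have := (prod_hh_shift a k).symm
  calc (∏ j ∈ Finset.range k, hh (a + j + 1)) * hh a
      = hh a * ∏ j ∈ Finset.range k, hh (a + j + 1) := mul_comm _ _
    _ = ∏ j ∈ Finset.range (k+1), hh (a + j) := this
    _ = (∏ j ∈ Finset.range k, hh (a + j)) * hh (a + k) := Finset.prod_range_succ _ _
    _ = (∏ j ∈ Finset.range k, hh (a + j)) * hh ((n : ℤ) + 1) := by
        have e : a + k = (n : ℤ) + 1 := by rw [ha]; ring
        rw [e]

lemma key1 (n k : ℕ) : hh ((n : ℤ) + 1) =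
    q ^ ((k : ℤ) + 1) * hh ((n : ℤ) - k) + q ^ ((k : ℤ) - n) * hh ((k : ℤ) + 1) := by
  simp only [hh, mul_sub, qmul]
  have e1 : (k : ℤ) + 1 + ((n : ℤ) - k) = (n : ℤ) + 1 := by ring
  have e2 : (k : ℤ) + 1 + -((n : ℤ) - k) = 2*k + 1 - n := by ring
  have e3 : (k : ℤ) - n + ((k : ℤ) + 1) = 2*k + 1 - n := by ring
  have e4 : (k : ℤ) - n + -((k : ℤ) + 1) = -((n : ℤ) + 1) := by ring
  rw [e1, e2, e3, e4]
  ring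

lemma key2 (n k : ℕ) : hh ((n : ℤ) + 1) =
    q ^ (-((k : ℤ) + 1)) * hh ((n : ℤ) - k) + q ^ ((n : ℤ) - k) * hh ((k : ℤ) + 1) := by
  simp only [hh, mul_sub, qmul]
  have e1 : -((k : ℤ) + 1) + ((n : ℤ) - k) = (n : ℤ) - 2*k - 1 := by ring
  have e2 : -((k : ℤ) + 1) + -((n : ℤ) - k) = -((n : ℤ) + 1) := by ring
  have e3 : (n : ℤ) - k + ((k : ℤ) + 1) = (n : ℤ) + 1 := by ring
  have e4 : (n : ℤ) - k + -((k : ℤ) + 1) = (n : ℤ) - 2*k - 1 := by ring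
  rw [e1, e2, e3, e4]
  ring

lemma pascal_aux (n k : ℕ) (c d : RatFunc ℚ)
    (hkey : hh ((n : ℤ) + 1) = c * hh ((n : ℤ) - k) + d * hh ((k : ℤ) + 1)) :
    qbinom (n + 1) (k + 1) = c * qbinom n (k + 1) + d * qbinom n k := by
  rcases lt_trichotomy k n with hlt | heq | hgt
  · have hx : hh ((n : ℤ) - k) ≠ 0 := hh_ne_zero (by omega)
    have habs := qbinom_absorb n (k + 1)
    have e : (n : ℤ) + 1 - ((k + 1 : ℕ) : ℤ) = (n : ℤ) - k := by push_cast; ring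
    rw [e] at habs
    have hstep := qbinom_step n k
    -- habs : qbinom (n+1) (k+1) * hh (n - k) = qbinom n (k+1) * hh (n+1)
    -- hstep : qbinom n (k+1) * hh (k+1) = qbinom n k * hh (n - k)
    have goal_mul : (qbinom (n + 1) (k + 1)) * hh ((n : ℤ) - k) =
        (c * qbinom n (k + 1) + d * qbinom n k) * hh ((n : ℤ) - k) := by
      rw [habs, hkey]
      have : d * qbinom n k * hh ((n : ℤ) - k) = d * (qbinom n k * hh ((n : ℤ) - k)) := by ring
      calc qbinom n (k + 1) * (c * hh ((n : ℤ) - k) + d * hh ((k : ℤ) + 1))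
          = c * qbinom n (k + 1) * hh ((n : ℤ) - k)
            + d * (qbinom n (k + 1) * hh ((k : ℤ) + 1)) := by ring
        _ = c * qbinom n (k + 1) * hh ((n : ℤ) - k)
            + d * (qbinom n k * hh ((n : ℤ) - k)) := by rw [hstep]
        _ = (c * qbinom n (k + 1) + d * qbinom n k) * hh ((n : ℤ) - k) := by ring
    exact mul_right_cancel₀ hx goal_mul
  · subst heq
    rw [qbinom_self, qbinom_of_lt (by omega), qbinom_self]
    have h0 : hh ((k : ℤ) - k) = 0 := by
      rw [show (k : ℤ) - k = 0 by ring]; simp [hh]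
    rw [h0, mul_zero, zero_add] at hkey
    have hx : hh ((k : ℤ) + 1) ≠ 0 := hh_ne_zero (by positivity)
    have hd : (1 : RatFunc ℚ) * hh ((k : ℤ) + 1) = d * hh ((k : ℤ) + 1) := by
      rw [one_mul]; exact hkey
    have := mul_right_cancel₀ hx hd
    simp [← this]
  · rw [qbinom_of_lt (by omega), qbinom_of_lt (by omega), qbinom_of_lt (by omega)]
    simp

lemma pascal1 (n k : ℕ) :
    qbinom (n + 1) (k + 1) = q ^ ((k : ℤ) + 1) * qbinom n (k + 1) + q ^ ((k : ℤ) - n) * qbinom n k :=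
  pascal_aux n k _ _ (key1 n k)

lemma pascal2 (n k : ℕ) :
    qbinom (n + 1) (k + 1) = q ^ (-((k : ℤ) + 1)) * qbinom n (k + 1) + q ^ ((n : ℤ) - k) * qbinom n k :=
  pascal_aux n k _ _ (key2 n k)

/-- `S n = ∑ (-1)^k [n,k] q^{-(n+1)k}`. -/
noncomputable def S (n : ℕ) : RatFunc ℚ :=
  ∑ k ∈ Finset.range (n + 1), (-1 : RatFunc ℚ) ^ k * qbinom n k * q ^ (-((n : ℤ) + 1) * k)

lemma S_zero : S 0 = 1 := by simp [S, qbinom_zero]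

lemma shiftS (n : ℕ) :
    (∑ k ∈ Finset.range (n + 1),
      (-1 : RatFunc ℚ) ^ (k + 1) * qbinom n (k + 1) * q ^ (-((n : ℤ) + 1) * ((k : ℤ) + 1))) + 1 =
    S n := by
  have h := Finset.sum_range_succ'
    (fun k => (-1 : RatFunc ℚ) ^ k * qbinom n k * q ^ (-((n : ℤ) + 1) * k)) (n + 1)
  have htop := Finset.sum_range_succ
    (fun k => (-1 : RatFunc ℚ) ^ k * qbinom n k * q ^ (-((n : ℤ) + 1) * k)) (n + 1)
  have hlast : (-1 : RatFunc ℚ) ^ (n + 1) * qbinom n (n + 1) * q ^ (-((n : ℤ) + 1) * ((n + 1 : ℕ) : ℤ)) = 0 := by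
    rw [qbinom_of_lt (by omega)]; ring
  have e0 : (-1 : RatFunc ℚ) ^ 0 * qbinom n 0 * q ^ (-((n : ℤ) + 1) * ((0 : ℕ) : ℤ)) = 1 := by
    simp [qbinom_zero]
  have hS : (∑ k ∈ Finset.range (n + 2),
      (-1 : RatFunc ℚ) ^ k * qbinom n k * q ^ (-((n : ℤ) + 1) * k)) = S n := by
    rw [htop, hlast, add_zero]; rfl
  rw [← hS, h, e0]
  congr 1

lemma S_succ (n : ℕ) : S (n + 1) = (1 - q ^ (-(2 * ((n : ℤ) + 1)))) * S n := by
  have hstep := Finset.sum_range_succ'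
    (fun k => (-1 : RatFunc ℚ) ^ k * qbinom (n + 1) k * q ^ (-(((n + 1 : ℕ) : ℤ) + 1) * (k : ℤ)))
    (n + 1)
  rw [show S (n + 1) = _ from hstep]
  simp only [pow_zero, qbinom_zero, Nat.cast_zero, mul_zero, zpow_zero, one_mul, mul_one]
  have hsplit : ∀ k ∈ Finset.range (n + 1),
      (-1 : RatFunc ℚ) ^ (k + 1) * qbinom (n + 1) (k + 1) *
        q ^ (-(((n + 1 : ℕ) : ℤ) + 1) * ((k + 1 : ℕ) : ℤ)) =
      ((-1 : RatFunc ℚ) ^ (k + 1) * qbinom n (k + 1) * q ^ (-((n : ℤ) + 1) * ((k : ℤ) + 1)))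
      + (- q ^ (-(2 * ((n : ℤ) + 1)))) *
          ((-1 : RatFunc ℚ) ^ k * qbinom n k * q ^ (-((n : ℤ) + 1) * (k : ℤ))) := by
    intro k _
    rw [pascal1 n k]
    push_cast
    have h1 : q ^ ((k : ℤ) + 1) * q ^ (-(((n : ℤ) + 1) + 1) * ((k : ℤ) + 1)) =
        q ^ (-((n : ℤ) + 1) * ((k : ℤ) + 1)) := by
      rw [qmul]; ring_nf
    have h2 : q ^ ((k : ℤ) - n) * q ^ (-(((n : ℤ) + 1) + 1) * ((k : ℤ) + 1)) =
        q ^ (-(2 * ((n : ℤ) + 1))) * q ^ (-((n : ℤ) + 1) * (k : ℤ)) := by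
      rw [qmul, qmul]; ring_nf
    linear_combination ((-1 : RatFunc ℚ) ^ (k + 1) * qbinom n (k + 1)) * h1
      + ((-1 : RatFunc ℚ) ^ (k + 1) * qbinom n k) * h2
  rw [Finset.sum_congr rfl hsplit, Finset.sum_add_distrib]
  have hb : (∑ k ∈ Finset.range (n + 1), (- q ^ (-(2 * ((n : ℤ) + 1)))) *
      ((-1 : RatFunc ℚ) ^ k * qbinom n k * q ^ (-((n : ℤ) + 1) * (k : ℤ)))) =
      (- q ^ (-(2 * ((n : ℤ) + 1)))) * S n := by
    rw [← Finset.mul_sum]; rfl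
  have ha := shiftS n
  rw [hb]
  linear_combination ha

lemma T_eq (n : ℕ) :
    ∑ k ∈ Finset.range (n + 2), (-1 : RatFunc ℚ) ^ k * qbinom (n + 1) k * q ^ (-(n : ℤ) * (k : ℤ)) = 0 := by
  rw [Finset.sum_range_succ'
    (fun k => (-1 : RatFunc ℚ) ^ k * qbinom (n + 1) k * q ^ (-(n : ℤ) * (k : ℤ))) (n + 1)]
  simp only [pow_zero, qbinom_zero, Nat.cast_zero, mul_zero, zpow_zero, one_mul, mul_one]
  have hsplit : ∀ k ∈ Finset.range (n + 1),
      (-1 : RatFunc ℚ) ^ (k + 1) * qbinom (n + 1) (k + 1) * q ^ (-(n : ℤ) * ((k + 1 : ℕ) : ℤ)) =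
      ((-1 : RatFunc ℚ) ^ (k + 1) * qbinom n (k + 1) * q ^ (-((n : ℤ) + 1) * ((k : ℤ) + 1)))
      + (- ((-1 : RatFunc ℚ) ^ k * qbinom n k * q ^ (-((n : ℤ) + 1) * (k : ℤ)))) := by
    intro k _
    rw [pascal2 n k]
    push_cast
    have h1 : q ^ (-((k : ℤ) + 1)) * q ^ (-(n : ℤ) * ((k : ℤ) + 1)) =
        q ^ (-((n : ℤ) + 1) * ((k : ℤ) + 1)) := by
      rw [qmul]; ring_nf
    have h2 : q ^ ((n : ℤ) - k) * q ^ (-(n : ℤ) * ((k : ℤ) + 1)) =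
        q ^ (-((n : ℤ) + 1) * (k : ℤ)) := by
      rw [qmul]; ring_nf
    linear_combination ((-1 : RatFunc ℚ) ^ (k + 1) * qbinom n (k + 1)) * h1
      + ((-1 : RatFunc ℚ) ^ (k + 1) * qbinom n k) * h2
  rw [Finset.sum_congr rfl hsplit, Finset.sum_add_distrib]
  have hb : (∑ k ∈ Finset.range (n + 1),
      (- ((-1 : RatFunc ℚ) ^ k * qbinom n k * q ^ (-((n : ℤ) + 1) * (k : ℤ))))) = - S n := by
    rw [Finset.sum_neg_distrib]; rfl
  have ha := shiftS n
  rw [hb]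
  linear_combination ha

lemma S_eq (n : ℕ) : S n = ∏ j ∈ Finset.range n, (1 - q ^ (-(2 * ((j : ℤ) + 1)))) := by
  induction n with
  | zero => simpa using S_zero
  | succ n ih =>
    rw [S_succ, ih, Finset.prod_range_succ]
    ring

lemma q_sq_ne_one : q ^ (2 : ℤ) ≠ 1 := by
  have := q_pow_ne_one (n := 2) (by norm_num)
  simpa using this

lemma geom (c : ℤ) (N : ℕ) :
    ∑ l ∈ Finset.range N, q ^ (c + 2 * (l : ℤ)) =
      q ^ c * (q ^ (2 * (N : ℤ)) - 1) / (q ^ (2 : ℤ) - 1) := by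
  have hterm : ∀ l : ℕ, q ^ (c + 2 * (l : ℤ)) = q ^ c * (q ^ (2 : ℤ)) ^ l := by
    intro l
    rw [← qmul]
    congr 1
    rw [← zpow_natCast (q ^ (2 : ℤ)) l, ← zpow_mul]
  rw [Finset.sum_congr rfl (fun l _ => hterm l), ← Finset.mul_sum, geom_sum_eq q_sq_ne_one,
    ← zpow_natCast (q ^ (2 : ℤ)) N, ← zpow_mul, mul_div_assoc]


/-- The closed evaluation of the double sum computing the coefficient `a_j`
(equations (3.24)–(3.27)) in the proof of Theorem 3.3. -/
theorem stmt_6 (m : ℕ) (hm : 1 ≤ m) :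
    ∑ k ∈ Finset.range (m + 1),
        (-1 : RatFunc ℚ) ^ k * qbinom m k *
          (∑ l ∈ Finset.range (m - k),
            q ^ (-(((m : ℤ) - 1) * k) - 2 * ((m : ℤ) - 1) + 2 * l)) =
      q * (q - q⁻¹)⁻¹ * ∏ j ∈ Finset.range m, (1 - q ^ (-(2 * ((j : ℤ) + 1)))) := by
  obtain ⟨n, rfl⟩ : ∃ n, m = n + 1 := ⟨m - 1, by omega⟩
  have hterm : ∀ k ∈ Finset.range (n + 1 + 1),
      (-1 : RatFunc ℚ) ^ k * qbinom (n + 1) k *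
        (∑ l ∈ Finset.range (n + 1 - k),
          q ^ (-((((n + 1 : ℕ) : ℤ) - 1) * k) - 2 * (((n + 1 : ℕ) : ℤ) - 1) + 2 * l)) =
      (q ^ (2 : ℤ) * ((-1 : RatFunc ℚ) ^ k * qbinom (n + 1) k *
          q ^ (-(((n + 1 : ℕ) : ℤ) + 1) * (k : ℤ)))
        - q ^ (-(2 * (n : ℤ))) * ((-1 : RatFunc ℚ) ^ k * qbinom (n + 1) k *
          q ^ (-(n : ℤ) * (k : ℤ)))) / (q ^ (2 : ℤ) - 1) := by
    intro k hk
    rw [Finset.mem_range] at hk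
    rw [geom]
    have hcast : ((n + 1 - k : ℕ) : ℤ) = (n : ℤ) + 1 - k := by omega
    rw [hcast, ← mul_div_assoc]
    congr 1
    push_cast
    have h1 : q ^ (-(((n : ℤ) + 1 - 1) * k) - 2 * ((n : ℤ) + 1 - 1)) *
        q ^ (2 * ((n : ℤ) + 1 - k)) = q ^ (2 : ℤ) * q ^ (-(((n : ℤ) + 1) + 1) * (k : ℤ)) := by
      rw [qmul, qmul]; ring_nf
    have h2 : q ^ (-(((n : ℤ) + 1 - 1) * k) - 2 * ((n : ℤ) + 1 - 1)) =
        q ^ (-(2 * (n : ℤ))) * q ^ (-(n : ℤ) * (k : ℤ)) := by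
      rw [qmul]; ring_nf
    linear_combination ((-1 : RatFunc ℚ) ^ k * qbinom (n + 1) k) * h1
      - ((-1 : RatFunc ℚ) ^ k * qbinom (n + 1) k) * h2
  rw [Finset.sum_congr rfl hterm, ← Finset.sum_div, Finset.sum_sub_distrib,
    ← Finset.mul_sum, ← Finset.mul_sum]
  have hS : (∑ k ∈ Finset.range (n + 1 + 1), (-1 : RatFunc ℚ) ^ k * qbinom (n + 1) k *
      q ^ (-(((n + 1 : ℕ) : ℤ) + 1) * (k : ℤ))) = S (n + 1) := rfl
  have hT : (∑ k ∈ Finset.range (n + 1 + 1), (-1 : RatFunc ℚ) ^ k * qbinom (n + 1) k *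
      q ^ (-(n : ℤ) * (k : ℤ))) = 0 := T_eq n
  rw [hS, hT, mul_zero, sub_zero, S_eq]
  rw [mul_div_right_comm]
  congr 1
  have h2 : q ^ (2 : ℤ) = q * q := by
    rw [show (2 : ℤ) = 1 + 1 from rfl, ← qmul, zpow_one]
  have hden : q - q⁻¹ ≠ 0 := by
    have := hh_ne_zero (t := 1) one_pos
    simpa [hh, zpow_one, zpow_neg] using this
  have hden2 : q ^ (2 : ℤ) - 1 ≠ 0 := sub_ne_zero.mpr q_sq_ne_one
  rw [h2] at hden2 ⊢
  field_simp [q_ne_zero, hden, hden2]
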